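/- Let (G,sigma) be a finite signed graph. Then (G,sigma) is clusterable if and only if no negative edge joins two vertices lying in the same connected component of the spanning subgraph (V, E^+(sigma)). Moreover, if (G,sigma) is clusterable, then its cluster number clu(G,sigma) equals the chromatic number of the simple graph whose vertices are the connected components of (V, E^+(sigma)), with two distinct components adjacent exactly when some negative edge of (G,sigma) joins a vertex of one to a vertex of the other. -/

import Mathlib

open SimpleGraph Finset


/-- A signed graph is clusterable if the vertices can be partitioned into clusters so that
edges within a cluster are positive and edges between clusters are negative.  We record a
clustering by its cluster-assignment function. -/
def Clusterable {V : Type*} (G : SimpleGraph V) (σ : Sym2 V → ℤˣ) : Prop :=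
  ∃ c : V → ℕ, ∀ u v : V, G.Adj u v → (σ s(u, v) = 1 ↔ c u = c v)

/-- The cluster number: the least number of clusters in a clustering. -/
noncomputable def clusterNum {V : Type*} (G : SimpleGraph V) (σ : Sym2 V → ℤˣ) : ℕ :=
  sInf {n | ∃ c : V → Fin n, ∀ u v : V, G.Adj u v → (σ s(u, v) = 1 ↔ c u = c v)}

/-- The inclusterability index: the least number of edges whose deletion yields a
clusterable signed graph. -/
noncomputable def inclusterIndex {V : Type*} (G : SimpleGraph V) (σ : Sym2 V → ℤˣ) : ℕ :=
  sInf {n | ∃ S : Finset (Sym2 V), ↑S ⊆ G.edgeSet ∧ S.card = n ∧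
    Clusterable (G.deleteEdges ↑S) σ}

/-- The spanning subgraph of positive edges. -/
def posSubgraph {V : Type*} (G : SimpleGraph V) (σ : Sym2 V → ℤˣ) : SimpleGraph V where
  Adj u v := G.Adj u v ∧ σ s(u, v) = 1
  symm := ⟨by
    rintro u v ⟨h1, h2⟩
    exact ⟨h1.symm, by rwa [Sym2.eq_swap] at h2⟩⟩
  loopless := ⟨fun v h => G.loopless.irrefl v h.1⟩

/-- The graph on the connected components of the positive subgraph, two components being
adjacent when some negative edge joins them. -/
def compGraph {V : Type*} (G : SimpleGraph V) (σ : Sym2 V → ℤˣ) :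
    SimpleGraph (posSubgraph G σ).ConnectedComponent where
  Adj C D := C ≠ D ∧ ∃ u v : V, G.Adj u v ∧ σ s(u, v) = -1 ∧
    (posSubgraph G σ).connectedComponentMk u = C ∧
    (posSubgraph G σ).connectedComponentMk v = D
  symm := ⟨by
    rintro C D ⟨hne, u, v, h1, h2, h3, h4⟩
    exact ⟨hne.symm, v, u, h1.symm, by rwa [Sym2.eq_swap] at h2, h4, h3⟩⟩
  loopless := ⟨fun C h => h.1 rfl⟩

/-- Any cluster-assignment function is constant on components of the positive subgraph. -/
lemma cluster_const_on_comp {V : Type*} {G : SimpleGraph V} {σ : Sym2 V → ℤˣ} {α : Type*}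
    (c : V → α) (hc : ∀ u v : V, G.Adj u v → (σ s(u, v) = 1 ↔ c u = c v))
    {u v : V} (h : (posSubgraph G σ).Reachable u v) : c u = c v := by
  obtain ⟨w⟩ := h
  induction w with
  | nil => rfl
  | cons h _ ih => exact ((hc _ _ h.1).mp h.2).trans ih

lemma mk_out {V : Type*} (G : SimpleGraph V) (C : G.ConnectedComponent) :
    G.connectedComponentMk (Quot.out C) = C := Quot.out_eq C

lemma sigma_neg {V : Type*} {σ : Sym2 V → ℤˣ} {e : Sym2 V} (h : ¬ σ e = 1) : σ e = -1 := by
  rcases Int.units_eq_one_or (σ e) with h1 | h1 <;> simp_all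

/-- A finite signed graph is clusterable iff no negative edge joins two vertices in the
same component of the positive subgraph; and in that case the cluster number equals the
chromatic number of the component graph. -/
theorem clusterable_iff_and_clusterNum {V : Type*} [Fintype V] (G : SimpleGraph V)
    (σ : Sym2 V → ℤˣ) :
    (Clusterable G σ ↔ ∀ u v : V, G.Adj u v → σ s(u, v) = -1 →
      ¬ (posSubgraph G σ).Reachable u v) ∧
    (Clusterable G σ → (clusterNum G σ : ℕ∞) = (compGraph G σ).chromaticNumber) := by
  classical
  have key : Clusterable G σ → ∀ u v : V, G.Adj u v → σ s(u, v) = -1 →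
      ¬ (posSubgraph G σ).Reachable u v := by
    rintro ⟨c, hc⟩ u v hadj hneg hreach
    have := cluster_const_on_comp c hc hreach
    have h1 := (hc u v hadj).mpr this
    rw [hneg] at h1
    exact absurd h1 (by decide)
  constructor
  · constructor
    · exact key
    · intro h
      have e := Fintype.equivFin V
      refine ⟨fun v => (e (Quot.out ((posSubgraph G σ).connectedComponentMk v)) : ℕ),
        fun u v hadj => ?_⟩
      dsimp only
      constructor
      · intro hpos
        have : (posSubgraph G σ).connectedComponentMk u =
            (posSubgraph G σ).connectedComponentMk v :=
          ConnectedComponent.eq.mpr ⟨Adj.toWalk ⟨hadj, hpos⟩⟩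
        rw [this]
      · intro hcc
        by_contra hne
        have hneg := sigma_neg hne
        have : (posSubgraph G σ).connectedComponentMk u =
            (posSubgraph G σ).connectedComponentMk v := by
          have h1 := e.injective (Fin.val_injective hcc)
          have := congrArg (posSubgraph G σ).connectedComponentMk h1
          rwa [mk_out, mk_out] at this
        exact h u v hadj hneg (ConnectedComponent.eq.mp this)
  · intro hcl
    have hk := key hcl
    have hsets : {n | ∃ c : V → Fin n, ∀ u v : V, G.Adj u v → (σ s(u, v) = 1 ↔ c u = c v)}
        = {n | (compGraph G σ).Colorable n} := by
      ext n
      simp only [Set.mem_setOf_eq]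
      constructor
      · rintro ⟨c, hc⟩
        refine ⟨⟨fun C => c (Quot.out C), ?_⟩⟩
        rintro C D ⟨hne, u, v, hadj, hneg, hu, hv⟩ heq
        have h1 : c (Quot.out C) = c u := by
          apply cluster_const_on_comp c hc
          apply ConnectedComponent.eq.mp
          rw [mk_out, hu]
        have h2 : c (Quot.out D) = c v := by
          apply cluster_const_on_comp c hc
          apply ConnectedComponent.eq.mp
          rw [mk_out, hv]
        have : c u = c v := by rw [← h1, ← h2, heq]
        have := (hc u v hadj).mpr this
        rw [this] at hneg
        exact absurd hneg (by decide)
      · rintro ⟨f⟩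
        refine ⟨fun v => f ((posSubgraph G σ).connectedComponentMk v), fun u v hadj => ?_⟩
        dsimp only
        constructor
        · intro hpos
          have : (posSubgraph G σ).connectedComponentMk u =
              (posSubgraph G σ).connectedComponentMk v :=
            ConnectedComponent.eq.mpr ⟨Adj.toWalk ⟨hadj, hpos⟩⟩
          rw [this]
        · intro hcc
          by_contra hne
          have hneg := sigma_neg hne
          by_cases hsame : (posSubgraph G σ).connectedComponentMk u =
              (posSubgraph G σ).connectedComponentMk v
          · exact hk u v hadj hneg (ConnectedComponent.eq.mp hsame)
          · exact f.valid ⟨hsame, u, v, hadj, hneg, rfl, rfl⟩ hcc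
    have hfin : Finite (posSubgraph G σ).ConnectedComponent := Quot.finite _
    have hft : Fintype (posSubgraph G σ).ConnectedComponent := Fintype.ofFinite _
    have hcol : (compGraph G σ).Colorable (Fintype.card (posSubgraph G σ).ConnectedComponent) :=
      (compGraph G σ).colorable_of_fintype
    rw [hcol.chromaticNumber_eq_sInf, clusterNum, hsets]
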